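/- For every positive integer n, all integers m ≥ 0 and k > m, and every real number y, one has q_m(y(y + 1)) = (−1)^m (n/2)_m (k − m)_m · Σ_{l=0}^m [(−y)_l (−m)_l (1 + y)_l] / [(n/2)_l (1 − k)_l · l!]. (The right-hand side is the terminating hypergeometric series ₃F₂[−y, −m, 1+y; n/2, 1−k; 1] times the prefactor, exhibiting q_m as a dual Hahn polynomial R_m(λ(y); n/2−1, 1−n/2, k) up to a multiplicative factor, where λ(x) = x(x+1).) -/

import Mathlib

/-- Pochhammer symbol `(a)_l = a(a+1)⋯(a+l-1)`, with `(a)_0 = 1`. -/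
noncomputable def poch (a : ℝ) (l : ℕ) : ℝ := ∏ i ∈ Finset.range l, (a + i)

/-- The polynomial `q_m(y) = Σ_{l=0}^m (−1)^{m−l} (n/2+l)_{m−l} (k−m)_{m−l} C(m,l)
Π_{j=1}^l (y − j(j−1))`. -/
noncomputable def qq (n k m : ℕ) (y : ℝ) : ℝ :=
  ∑ l ∈ Finset.range (m + 1),
    (-1 : ℝ) ^ (m - l) * poch ((n : ℝ) / 2 + l) (m - l) * poch ((k : ℝ) - m) (m - l)
      * (m.choose l) * ∏ j ∈ Finset.range l, (y - ((j : ℝ) + 1) * (j : ℝ))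

lemma poch_succ (a : ℝ) (l : ℕ) : poch a (l + 1) = poch a l * (a + l) :=
  Finset.prod_range_succ _ _

lemma poch_add (a : ℝ) (p q : ℕ) : poch a (p + q) = poch a p * poch (a + p) q := by
  induction q with
  | zero => simp [poch]
  | succ q ih =>
      rw [← Nat.add_assoc, poch_succ, poch_succ, ih]
      push_cast
      ring

lemma poch_pos (a : ℝ) (ha : 0 < a) (l : ℕ) : 0 < poch a l := by
  refine Finset.prod_pos fun i _ => ?_
  positivity

lemma poch_neg_nat (m l : ℕ) (hl : l ≤ m) :
    poch (-(m : ℝ)) l = (-1) ^ l * (m.choose l : ℝ) * (l.factorial : ℝ) := by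
  induction l with
  | zero => simp [poch]
  | succ l ih =>
      have hl' : l ≤ m := Nat.le_of_succ_le hl
      rw [poch_succ, ih hl']
      have key : (m.choose (l + 1) : ℝ) * (l + 1) = (m.choose l : ℝ) * ((m : ℝ) - l) := by
        have := Nat.choose_succ_right_eq m l
        have h2 : (m.choose (l + 1) * (l + 1) : ℕ) = (m.choose l * (m - l) : ℕ) := this
        have := congrArg (Nat.cast : ℕ → ℝ) h2
        push_cast [Nat.cast_sub hl'] at this
        linarith [this]
      have : (-(m : ℝ) + l) = -((m : ℝ) - l) := by ring
      rw [this]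
      push_cast [Nat.factorial_succ]
      linear_combination ((-1 : ℝ)) ^ l * (l.factorial : ℝ) * key

lemma poch_one_sub (k l : ℕ) (hl : l ≤ k) :
    poch (1 - (k : ℝ)) l = (-1) ^ l * poch ((k : ℝ) - l) l := by
  induction l with
  | zero => simp [poch]
  | succ l ih =>
      have hl' : l ≤ k := Nat.le_of_succ_le hl
      rw [poch_succ, ih hl']
      have hsp : poch ((k : ℝ) - (l + 1)) (l + 1)
          = ((k : ℝ) - (l + 1)) * poch ((k : ℝ) - l) l := by
        have h := poch_add ((k : ℝ) - (l + 1)) 1 l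
        rw [Nat.add_comm] at h
        rw [h]
        have h1 : poch ((k : ℝ) - (l + 1)) 1 = (k : ℝ) - (l + 1) := by
          simp [poch]
        have h2 : ((k : ℝ) - (l + 1) + ((1 : ℕ) : ℝ)) = (k : ℝ) - l := by
          push_cast; ring
        rw [h1, h2]
      push_cast [hsp]
      ring

lemma poch_prod (y : ℝ) (l : ℕ) :
    poch (-y) l * poch (1 + y) l
      = (-1) ^ l * ∏ j ∈ Finset.range l, (y * (y + 1) - ((j : ℝ) + 1) * (j : ℝ)) := by
  unfold poch
  rw [← Finset.prod_mul_distrib]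
  have hc : ((-1 : ℝ)) ^ l = ∏ _j ∈ Finset.range l, (-1 : ℝ) := by simp
  rw [hc, ← Finset.prod_mul_distrib]
  refine Finset.prod_congr rfl fun i _ => ?_
  ring

/-- `q_m(y(y+1))` equals a multiple of the terminating hypergeometric series
`₃F₂[−y, −m, 1+y; n/2, 1−k; 1]`, i.e. a dual Hahn polynomial. -/
theorem stmt4 (n : ℕ) (hn : 0 < n) (m k : ℕ) (hk : m < k) (y : ℝ) :
    qq n k m (y * (y + 1))
      = (-1 : ℝ) ^ m * poch ((n : ℝ) / 2) m * poch ((k : ℝ) - m) m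
          * ∑ l ∈ Finset.range (m + 1),
              poch (-y) l * poch (-(m : ℝ)) l * poch (1 + y) l
                / (poch ((n : ℝ) / 2) l * poch (1 - (k : ℝ)) l * (l.factorial : ℝ)) := by
  unfold qq
  rw [Finset.mul_sum]
  refine Finset.sum_congr rfl fun l hl => ?_
  have hlm : l ≤ m := Nat.lt_succ_iff.mp (Finset.mem_range.mp hl)
  have hlk : l ≤ k := hlm.trans hk.le
  -- splittings
  have hnm : poch ((n : ℝ) / 2) m = poch ((n : ℝ) / 2) l * poch ((n : ℝ) / 2 + l) (m - l) := by
    rw [← poch_add, Nat.add_sub_cancel' hlm]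
  have hkm : poch ((k : ℝ) - m) m
      = poch ((k : ℝ) - m) (m - l) * poch ((k : ℝ) - l) l := by
    have h := poch_add ((k : ℝ) - m) (m - l) l
    rw [Nat.sub_add_cancel hlm] at h
    rw [h]
    congr 2
    push_cast [Nat.cast_sub hlm]
    ring
  have h1k := poch_one_sub k l hlk
  have hmn := poch_neg_nat m l hlm
  have hprod := poch_prod y l
  -- nonvanishing
  have hn2 : (0 : ℝ) < (n : ℝ) / 2 := by positivity
  have hpn : poch ((n : ℝ) / 2) l ≠ 0 := (poch_pos _ hn2 l).ne'
  have hkl : (0 : ℝ) < (k : ℝ) - l := by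
    have : l < k := lt_of_le_of_lt hlm hk
    have := Nat.cast_lt (α := ℝ).mpr this
    linarith
  have hpk : poch ((k : ℝ) - l) l ≠ 0 := (poch_pos _ hkl l).ne'
  have hf : (l.factorial : ℝ) ≠ 0 := Nat.cast_ne_zero.mpr l.factorial_ne_zero
  have hsign : ((-1 : ℝ)) ^ m = (-1 : ℝ) ^ (m - l) * (-1 : ℝ) ^ l := by
    rw [← pow_add, Nat.sub_add_cancel hlm]
  rw [hsign, hnm, hkm, h1k]
  have hmul : poch (-y) l * poch (-(m : ℝ)) l * poch (1 + y) l
      = poch (-y) l * poch (1 + y) l * poch (-(m : ℝ)) l := by ring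
  rw [hmul, hprod, hmn]
  rcases Nat.even_or_odd l with he | he
  · simp only [he.neg_one_pow]
    field_simp
  · simp only [he.neg_one_pow]
    field_simp
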